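/- Let Ω ⊆ ℝ³ be open, and let ρ : Ω → ℝ with ρ > 0, u = (u₁,u₂,u₃) : Ω → ℝ³ with u₁ > 0, and φ : Ω → ℝ be C² functions satisfying the steady Euler–Poisson continuity equation ∂₁(ρu₁)+∂₂(ρu₂)+∂₃(ρu₃) = 0 and momentum equations ∂₁(ρu_iu₁)+∂₂(ρu_iu₂)+∂₃(ρu_iu₃)+∂_i(p(ρ)) = ρ∂_iφ for i = 1,2,3. Assume moreover that the Bernoulli function B = ½(u₁²+u₂²+u₃²) + h(ρ) − φ is constant on Ω. Set β₂ = u₂/u₁, β₃ = u₃/u₁, G = 1 + β₂² + β₃², D = ∂₁ + β₂∂₂ + β₃∂₃, and W = ∂₂β₃ − ∂₃β₂ + β₃∂₁β₂ − β₂∂₁β₃. Then D(W/(ρG)) = 0 on Ω, i.e. the quantity W/(ρG) is conserved along the particle paths. -/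

import Mathlib

open Real Set MeasureTheory

/-- The `i`-th partial derivative of a function on `ℝ³`. -/
noncomputable def pd (i : Fin 3) (f : (Fin 3 → ℝ) → ℝ) (x : Fin 3 → ℝ) : ℝ :=
  fderiv ℝ f x (Pi.single i 1)

section Helpers
variable {f g : (Fin 3 → ℝ) → ℝ} {x : Fin 3 → ℝ} {i j : Fin 3} {Ω : Set (Fin 3 → ℝ)}

lemma pd_congr (hΩ : IsOpen Ω) (hx : x ∈ Ω) (hfg : ∀ y ∈ Ω, f y = g y) :
    pd i f x = pd i g x := by
  unfold pd
  rw [Filter.EventuallyEq.fderiv_eq (by filter_upwards [hΩ.mem_nhds hx] with y hy using hfg y hy)]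

lemma pd_add (hf : DifferentiableAt ℝ f x) (hg : DifferentiableAt ℝ g x) :
    pd i (fun y => f y + g y) x = pd i f x + pd i g x := by
  simp [pd, fderiv_fun_add hf hg]

lemma pd_sub (hf : DifferentiableAt ℝ f x) (hg : DifferentiableAt ℝ g x) :
    pd i (fun y => f y - g y) x = pd i f x - pd i g x := by
  simp [pd, fderiv_fun_sub hf hg]

lemma pd_mul (hf : DifferentiableAt ℝ f x) (hg : DifferentiableAt ℝ g x) :
    pd i (fun y => f y * g y) x = pd i f x * g x + f x * pd i g x := by
  simp [pd, fderiv_fun_mul hf hg]; ring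

lemma pd_const_mul (c : ℝ) (hf : DifferentiableAt ℝ f x) :
    pd i (fun y => c * f y) x = c * pd i f x := by
  simp [pd, fderiv_const_mul hf c]

lemma pd_sq (hf : DifferentiableAt ℝ f x) :
    pd i (fun y => f y ^ 2) x = 2 * f x * pd i f x := by
  have e : (fun y => f y ^ 2) = fun y => f y * f y := by funext y; ring
  rw [e, pd_mul hf hf]; ring

lemma pd_comp {φ : ℝ → ℝ} {c : ℝ} (hφ : HasDerivAt φ c (f x)) (hf : DifferentiableAt ℝ f x) :
    pd i (fun y => φ (f y)) x = c * pd i f x := by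
  have h := hφ.comp_hasFDerivAt x hf.hasFDerivAt
  have e : (fun y => φ (f y)) = φ ∘ f := rfl
  rw [pd, e, h.fderiv]; simp [pd]

lemma pd_inv (hf : DifferentiableAt ℝ f x) (h0 : f x ≠ 0) :
    pd i (fun y => (f y)⁻¹) x = -(pd i f x) / f x ^ 2 := by
  have h := pd_comp (f := f) (i := i) (hasDerivAt_inv h0) hf
  rw [h]; field_simp

lemma pd_div (hf : DifferentiableAt ℝ f x) (hg : DifferentiableAt ℝ g x) (h0 : g x ≠ 0) :
    pd i (fun y => f y / g y) x = (pd i f x * g x - f x * pd i g x) / g x ^ 2 := by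
  have e : (fun y => f y / g y) = fun y => f y * (g y)⁻¹ := by
    funext y; rw [div_eq_mul_inv]
  rw [e, pd_mul (g := fun y => (g y)⁻¹) hf (hg.inv h0), pd_inv hg h0]
  field_simp; ring

lemma diffAt_div (hf : DifferentiableAt ℝ f x) (hg : DifferentiableAt ℝ g x) (h0 : g x ≠ 0) :
    DifferentiableAt ℝ (fun y => f y / g y) x := by
  have e : (fun y => f y / g y) = fun y => f y * (g y)⁻¹ := by
    funext y; rw [div_eq_mul_inv]
  rw [e]; exact hf.mul (hg.inv h0)

lemma diffAt_pd (hΩ : IsOpen Ω) (hf : ContDiffOn ℝ 2 f Ω) (hx : x ∈ Ω) (j : Fin 3) :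
    DifferentiableAt ℝ (pd j f) x := by
  have h1 : ContDiffAt ℝ 2 f x := hf.contDiffAt (hΩ.mem_nhds hx)
  have h2 : ContDiffAt ℝ 1 (fderiv ℝ f) x := h1.fderiv_right (by norm_num)
  exact (h2.differentiableAt one_ne_zero).clm_apply (differentiableAt_const _)

lemma pd_comm (hΩ : IsOpen Ω) (hf : ContDiffOn ℝ 2 f Ω) (hx : x ∈ Ω) (i j : Fin 3) :
    pd i (pd j f) x = pd j (pd i f) x := by
  have h1 : ContDiffAt ℝ 2 f x := hf.contDiffAt (hΩ.mem_nhds hx)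
  have hsym := h1.isSymmSndFDerivAt (by norm_num)
  have h3 : DifferentiableAt ℝ (fderiv ℝ f) x :=
    (h1.fderiv_right (m := 1) (by norm_num)).differentiableAt one_ne_zero
  have key : ∀ v w : Fin 3 → ℝ,
      fderiv ℝ (fun y => fderiv ℝ f y v) x w = fderiv ℝ (fderiv ℝ f) x w v := by
    intro v w
    rw [fderiv_clm_apply h3 (differentiableAt_const v)]
    simp
  calc pd i (pd j f) x = fderiv ℝ (fderiv ℝ f) x (Pi.single i 1) (Pi.single j 1) :=
        key _ _
    _ = fderiv ℝ (fderiv ℝ f) x (Pi.single j 1) (Pi.single i 1) := hsym _ _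
    _ = pd j (pd i f) x := (key _ _).symm

end Helpers

/-- The slope `β₂ = u₂/u₁`. -/
noncomputable def beta2 (u1 u2 : (Fin 3 → ℝ) → ℝ) : (Fin 3 → ℝ) → ℝ :=
  fun x => u2 x / u1 x

/-- The slope `β₃ = u₃/u₁`. -/
noncomputable def beta3 (u1 u3 : (Fin 3 → ℝ) → ℝ) : (Fin 3 → ℝ) → ℝ :=
  fun x => u3 x / u1 x

/-- `G = 1 + β₂² + β₃²`. -/
noncomputable def Gfun (u1 u2 u3 : (Fin 3 → ℝ) → ℝ) : (Fin 3 → ℝ) → ℝ :=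
  fun x => 1 + (beta2 u1 u2 x) ^ 2 + (beta3 u1 u3 x) ^ 2

/-- `W = ∂₂β₃ − ∂₃β₂ + β₃∂₁β₂ − β₂∂₁β₃`. -/
noncomputable def Wfun (u1 u2 u3 : (Fin 3 → ℝ) → ℝ) : (Fin 3 → ℝ) → ℝ :=
  fun x => pd 1 (beta3 u1 u3) x - pd 2 (beta2 u1 u2) x
    + beta3 u1 u3 x * pd 0 (beta2 u1 u2) x - beta2 u1 u2 x * pd 0 (beta3 u1 u3) x

/-- The transport operator `D = ∂₁ + β₂∂₂ + β₃∂₃`. -/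
noncomputable def Dop (u1 u2 u3 : (Fin 3 → ℝ) → ℝ) (f : (Fin 3 → ℝ) → ℝ)
    (x : Fin 3 → ℝ) : ℝ :=
  pd 0 f x + beta2 u1 u2 x * pd 1 f x + beta3 u1 u3 x * pd 2 f x

/-- The Bernoulli function `B = ½(u₁²+u₂²+u₃²) + h(ρ) − φ`. -/
noncomputable def Bfun (ρ u1 u2 u3 φ : (Fin 3 → ℝ) → ℝ) (h : ℝ → ℝ) :
    (Fin 3 → ℝ) → ℝ :=
  fun x => (1 / 2) * ((u1 x) ^ 2 + (u2 x) ^ 2 + (u3 x) ^ 2) + h (ρ x) - φ x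

/-- If the Bernoulli function is constant, the quantity `W/(ρG)` is conserved along the
particle paths: `D(W/(ρG)) = 0`. -/
theorem W_over_rhoG_conserved
    (Ω : Set (Fin 3 → ℝ)) (hΩ : IsOpen Ω)
    (ρ u1 u2 u3 φ : (Fin 3 → ℝ) → ℝ)
    (p p' h : ℝ → ℝ)
    (hρpos : ∀ x ∈ Ω, 0 < ρ x)
    (hu1pos : ∀ x ∈ Ω, 0 < u1 x)
    (hρ : ContDiffOn ℝ 2 ρ Ω) (hu1 : ContDiffOn ℝ 2 u1 Ω)
    (hu2 : ContDiffOn ℝ 2 u2 Ω) (hu3 : ContDiffOn ℝ 2 u3 Ω)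
    (hφ : ContDiffOn ℝ 2 φ Ω)
    (hpC : ContDiffOn ℝ 2 p (Set.Ioi 0))
    (hp : ∀ r : ℝ, 0 < r → HasDerivAt p (p' r) r)
    (hh : ∀ r : ℝ, 0 < r → HasDerivAt h (p' r / r) r)
    (hcont : ∀ x ∈ Ω,
      pd 0 (fun y => ρ y * u1 y) x + pd 1 (fun y => ρ y * u2 y) x
        + pd 2 (fun y => ρ y * u3 y) x = 0)
    (hmom1 : ∀ x ∈ Ω,
      pd 0 (fun y => ρ y * u1 y * u1 y) x + pd 1 (fun y => ρ y * u1 y * u2 y) x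
        + pd 2 (fun y => ρ y * u1 y * u3 y) x + pd 0 (fun y => p (ρ y)) x
        = ρ x * pd 0 φ x)
    (hmom2 : ∀ x ∈ Ω,
      pd 0 (fun y => ρ y * u2 y * u1 y) x + pd 1 (fun y => ρ y * u2 y * u2 y) x
        + pd 2 (fun y => ρ y * u2 y * u3 y) x + pd 1 (fun y => p (ρ y)) x
        = ρ x * pd 1 φ x)
    (hmom3 : ∀ x ∈ Ω,
      pd 0 (fun y => ρ y * u3 y * u1 y) x + pd 1 (fun y => ρ y * u3 y * u2 y) x
        + pd 2 (fun y => ρ y * u3 y * u3 y) x + pd 2 (fun y => p (ρ y)) x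
        = ρ x * pd 2 φ x)
    (hBconst : ∀ x ∈ Ω, ∀ y ∈ Ω, Bfun ρ u1 u2 u3 φ h x = Bfun ρ u1 u2 u3 φ h y) :
    ∀ x ∈ Ω,
      Dop u1 u2 u3 (fun y => Wfun u1 u2 u3 y / (ρ y * Gfun u1 u2 u3 y)) x = 0 := by
  intro x hx
  have mem : ∀ {y : Fin 3 → ℝ}, y ∈ Ω → Ω ∈ nhds y := fun hy => hΩ.mem_nhds hy
  have dρ : ∀ y ∈ Ω, DifferentiableAt ℝ ρ y := fun y hy =>
    (hρ.contDiffAt (mem hy)).differentiableAt two_ne_zero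
  have du1 : ∀ y ∈ Ω, DifferentiableAt ℝ u1 y := fun y hy =>
    (hu1.contDiffAt (mem hy)).differentiableAt two_ne_zero
  have du2 : ∀ y ∈ Ω, DifferentiableAt ℝ u2 y := fun y hy =>
    (hu2.contDiffAt (mem hy)).differentiableAt two_ne_zero
  have du3 : ∀ y ∈ Ω, DifferentiableAt ℝ u3 y := fun y hy =>
    (hu3.contDiffAt (mem hy)).differentiableAt two_ne_zero
  have u1ne : ∀ y ∈ Ω, u1 y ≠ 0 := fun y hy => (hu1pos y hy).ne'
  have ρne : ∀ y ∈ Ω, ρ y ≠ 0 := fun y hy => (hρpos y hy).ne'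
  -- continuity expanded
  have Econt : ∀ y ∈ Ω,
      pd 0 ρ y * u1 y + ρ y * pd 0 u1 y + (pd 1 ρ y * u2 y + ρ y * pd 1 u2 y)
        + (pd 2 ρ y * u3 y + ρ y * pd 2 u3 y) = 0 := by
    intro y hy
    have hc := hcont y hy
    rw [pd_mul (dρ y hy) (du1 y hy), pd_mul (dρ y hy) (du2 y hy),
      pd_mul (dρ y hy) (du3 y hy)] at hc
    linear_combination hc
  -- Bernoulli gradient zero, multiplied by ρ
  have EB : ∀ y ∈ Ω, ∀ j : Fin 3,
      ρ y * (u1 y * pd j u1 y + u2 y * pd j u2 y + u3 y * pd j u3 y)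
        + p' (ρ y) * pd j ρ y - ρ y * pd j φ y = 0 := by
    intro y hy j
    have hBc : pd j (Bfun ρ u1 u2 u3 φ h) y = 0 := by
      have hev : Bfun ρ u1 u2 u3 φ h =ᶠ[nhds y] fun _ => Bfun ρ u1 u2 u3 φ h y := by
        filter_upwards [mem hy] with z hz using hBconst z hz y hy
      rw [pd, hev.fderiv_eq]; simp
    have dsq : DifferentiableAt ℝ (fun z => u1 z ^ 2 + u2 z ^ 2 + u3 z ^ 2) y :=
      (((du1 y hy).pow 2).add ((du2 y hy).pow 2)).add ((du3 y hy).pow 2)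
    have dhρ : DifferentiableAt ℝ (fun z => h (ρ z)) y :=
      ((hh (ρ y) (hρpos y hy)).differentiableAt.comp y (dρ y hy) : _)
    have dφ : DifferentiableAt ℝ φ y := (hφ.contDiffAt (mem hy)).differentiableAt two_ne_zero
    have e : Bfun ρ u1 u2 u3 φ h = fun z =>
        (1 / 2 : ℝ) * (u1 z ^ 2 + u2 z ^ 2 + u3 z ^ 2) + h (ρ z) - φ z := rfl
    rw [e, pd_sub (f := fun z => (1 / 2 : ℝ) * (u1 z ^ 2 + u2 z ^ 2 + u3 z ^ 2) + h (ρ z)) (((differentiableAt_const _).mul dsq).add dhρ) dφ,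
      pd_add (f := fun z => (1 / 2 : ℝ) * (u1 z ^ 2 + u2 z ^ 2 + u3 z ^ 2)) (g := fun z => h (ρ z)) ((differentiableAt_const _).mul dsq) dhρ,
      pd_const_mul _ dsq,
      pd_add (f := fun z => u1 z ^ 2 + u2 z ^ 2) (g := fun z => u3 z ^ 2) (((du1 y hy).pow 2).add ((du2 y hy).pow 2)) ((du3 y hy).pow 2),
      pd_add (f := fun z => u1 z ^ 2) (g := fun z => u2 z ^ 2) ((du1 y hy).pow 2) ((du2 y hy).pow 2),
      pd_sq (du1 y hy), pd_sq (du2 y hy), pd_sq (du3 y hy),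
      pd_comp (hh (ρ y) (hρpos y hy)) (dρ y hy)] at hBc
    have hρn := ρne y hy
    field_simp at hBc
    linear_combination hBc
  -- momentum expanded (components 2 and 3)
  have Emom2 : ∀ y ∈ Ω,
      ρ y * (u1 y * pd 0 u2 y + u2 y * pd 1 u2 y + u3 y * pd 2 u2 y)
        + p' (ρ y) * pd 1 ρ y = ρ y * pd 1 φ y := by
    intro y hy
    have hm := hmom2 y hy
    rw [pd_mul (f := fun z => ρ z * u2 z) ((dρ y hy).mul (du2 y hy)) (du1 y hy),
      pd_mul (f := fun z => ρ z * u2 z) ((dρ y hy).mul (du2 y hy)) (du2 y hy),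
      pd_mul (f := fun z => ρ z * u2 z) ((dρ y hy).mul (du2 y hy)) (du3 y hy),
      pd_mul (dρ y hy) (du2 y hy), pd_mul (dρ y hy) (du2 y hy),
      pd_mul (dρ y hy) (du2 y hy),
      pd_comp (hp (ρ y) (hρpos y hy)) (dρ y hy)] at hm
    linear_combination hm - u2 y * Econt y hy
  have Emom3 : ∀ y ∈ Ω,
      ρ y * (u1 y * pd 0 u3 y + u2 y * pd 1 u3 y + u3 y * pd 2 u3 y)
        + p' (ρ y) * pd 2 ρ y = ρ y * pd 2 φ y := by
    intro y hy
    have hm := hmom3 y hy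
    rw [pd_mul (f := fun z => ρ z * u3 z) ((dρ y hy).mul (du3 y hy)) (du1 y hy),
      pd_mul (f := fun z => ρ z * u3 z) ((dρ y hy).mul (du3 y hy)) (du2 y hy),
      pd_mul (f := fun z => ρ z * u3 z) ((dρ y hy).mul (du3 y hy)) (du3 y hy),
      pd_mul (dρ y hy) (du3 y hy), pd_mul (dρ y hy) (du3 y hy),
      pd_mul (dρ y hy) (du3 y hy),
      pd_comp (hp (ρ y) (hρpos y hy)) (dρ y hy)] at hm
    linear_combination hm - u3 y * Econt y hy
  -- vorticity parallel to velocity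
  have Ecross3 : ∀ y ∈ Ω,
      u1 y * (pd 0 u2 y - pd 1 u1 y) = u3 y * (pd 1 u3 y - pd 2 u2 y) := by
    intro y hy
    have key : ρ y * (u1 y * (pd 0 u2 y - pd 1 u1 y) - u3 y * (pd 1 u3 y - pd 2 u2 y)) = 0 := by
      linear_combination Emom2 y hy - EB y hy 1
    have := (mul_eq_zero.mp key).resolve_left (ρne y hy)
    linarith
  have Ecross2 : ∀ y ∈ Ω,
      u1 y * (pd 2 u1 y - pd 0 u3 y) = u2 y * (pd 1 u3 y - pd 2 u2 y) := by
    intro y hy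
    have key : ρ y * (u1 y * (pd 2 u1 y - pd 0 u3 y) - u2 y * (pd 1 u3 y - pd 2 u2 y)) = 0 := by
      linear_combination EB y hy 2 - Emom3 y hy
    have := (mul_eq_zero.mp key).resolve_left (ρne y hy)
    linarith
  -- differentiability of first-order derivatives at x
  have dpdu1 : ∀ j : Fin 3, DifferentiableAt ℝ (pd j u1) x := diffAt_pd hΩ hu1 hx
  have dpdu2 : ∀ j : Fin 3, DifferentiableAt ℝ (pd j u2) x := diffAt_pd hΩ hu2 hx
  have dpdu3 : ∀ j : Fin 3, DifferentiableAt ℝ (pd j u3) x := diffAt_pd hΩ hu3 hx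
  have dlam : DifferentiableAt ℝ (fun y => (pd 1 u3 y - pd 2 u2 y) / u1 y) x :=
    diffAt_div ((dpdu3 1).sub (dpdu2 2)) (du1 x hx) (u1ne x hx)
  -- divergence of vorticity vanishes (Clairaut)
  have Edivw : pd 0 (fun y => pd 1 u3 y - pd 2 u2 y) x
      + pd 1 (fun y => pd 2 u1 y - pd 0 u3 y) x
      + pd 2 (fun y => pd 0 u2 y - pd 1 u1 y) x = 0 := by
    rw [pd_sub (dpdu3 1) (dpdu2 2), pd_sub (dpdu1 2) (dpdu3 0), pd_sub (dpdu2 0) (dpdu1 1)]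
    have h1 := pd_comm hΩ hu3 hx 0 1
    have h2 := pd_comm hΩ hu2 hx 0 2
    have h3 := pd_comm hΩ hu1 hx 1 2
    linarith
  -- vorticity = λ · velocity on Ω
  have Ew1 : ∀ y ∈ Ω, pd 1 u3 y - pd 2 u2 y = (pd 1 u3 y - pd 2 u2 y) / u1 y * u1 y :=
    fun y hy => (div_mul_cancel₀ _ (u1ne y hy)).symm
  have Ew2 : ∀ y ∈ Ω, pd 2 u1 y - pd 0 u3 y = (pd 1 u3 y - pd 2 u2 y) / u1 y * u2 y := by
    intro y hy
    rw [div_mul_eq_mul_div, eq_div_iff (u1ne y hy)]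
    linear_combination Ecross2 y hy
  have Ew3 : ∀ y ∈ Ω, pd 0 u2 y - pd 1 u1 y = (pd 1 u3 y - pd 2 u2 y) / u1 y * u3 y := by
    intro y hy
    rw [div_mul_eq_mul_div, eq_div_iff (u1ne y hy)]
    linear_combination Ecross3 y hy
  have Ediv := Edivw
  rw [pd_congr (i := 0) hΩ hx Ew1, pd_congr (i := 1) hΩ hx Ew2,
    pd_congr (i := 2) hΩ hx Ew3, pd_mul dlam (du1 x hx), pd_mul dlam (du2 x hx),
    pd_mul dlam (du3 x hx)] at Ediv
  have Ediv' : u1 x * (pd 0 (fun y => (pd 1 u3 y - pd 2 u2 y) / u1 y) x * u1 x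
      + pd 1 (fun y => (pd 1 u3 y - pd 2 u2 y) / u1 y) x * u2 x
      + pd 2 (fun y => (pd 1 u3 y - pd 2 u2 y) / u1 y) x * u3 x)
      + (pd 1 u3 x - pd 2 u2 x) * (pd 0 u1 x + pd 1 u2 x + pd 2 u3 x) = 0 := by
    field_simp [u1ne x hx] at Ediv
    linear_combination Ediv
  -- W/(ρG) = λ/ρ on Ω
  have EF : ∀ y ∈ Ω, Wfun u1 u2 u3 y / (ρ y * Gfun u1 u2 u3 y)
      = (pd 1 u3 y - pd 2 u2 y) / u1 y / ρ y := by
    intro y hy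
    have e2 : ∀ j : Fin 3,
        pd j (beta2 u1 u2) y = (pd j u2 y * u1 y - u2 y * pd j u1 y) / u1 y ^ 2 := by
      intro j
      rw [show beta2 u1 u2 = (fun z => u2 z / u1 z) from rfl]
      exact pd_div (du2 y hy) (du1 y hy) (u1ne y hy)
    have e3 : ∀ j : Fin 3,
        pd j (beta3 u1 u3) y = (pd j u3 y * u1 y - u3 y * pd j u1 y) / u1 y ^ 2 := by
      intro j
      rw [show beta3 u1 u3 = (fun z => u3 z / u1 z) from rfl]
      exact pd_div (du3 y hy) (du1 y hy) (u1ne y hy)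
    have h2 := Ecross2 y hy
    have h3 := Ecross3 y hy
    have hu := u1ne y hy
    have hr := ρne y hy
    rw [show Wfun u1 u2 u3 y = pd 1 (beta3 u1 u3) y - pd 2 (beta2 u1 u2) y
        + beta3 u1 u3 y * pd 0 (beta2 u1 u2) y - beta2 u1 u2 y * pd 0 (beta3 u1 u3) y from rfl,
      show Gfun u1 u2 u3 y = 1 + (u2 y / u1 y) ^ 2 + (u3 y / u1 y) ^ 2 from rfl,
      e2 2, e2 0, e3 1, e3 0,
      show beta2 u1 u2 y = u2 y / u1 y from rfl,
      show beta3 u1 u3 y = u3 y / u1 y from rfl]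
    have hS : (0:ℝ) < u1 y ^ 2 + u2 y ^ 2 + u3 y ^ 2 := by positivity
    field_simp
    linear_combination u3 y * h3 + u2 y * h2
  -- conclude
  have hF : ∀ j : Fin 3, pd j (fun y => Wfun u1 u2 u3 y / (ρ y * Gfun u1 u2 u3 y)) x
      = pd j (fun y => (pd 1 u3 y - pd 2 u2 y) / u1 y / ρ y) x :=
    fun j => pd_congr hΩ hx EF
  show pd 0 (fun y => Wfun u1 u2 u3 y / (ρ y * Gfun u1 u2 u3 y)) x
      + beta2 u1 u2 x * pd 1 (fun y => Wfun u1 u2 u3 y / (ρ y * Gfun u1 u2 u3 y)) x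
      + beta3 u1 u3 x * pd 2 (fun y => Wfun u1 u2 u3 y / (ρ y * Gfun u1 u2 u3 y)) x = 0
  rw [hF 0, hF 1, hF 2,
    pd_div (i := 0) dlam (dρ x hx) (ρne x hx),
    pd_div (i := 1) dlam (dρ x hx) (ρne x hx),
    pd_div (i := 2) dlam (dρ x hx) (ρne x hx),
    show beta2 u1 u2 x = u2 x / u1 x from rfl,
    show beta3 u1 u3 x = u3 x / u1 x from rfl]
  have hu := u1ne x hx
  have hr := ρne x hx
  field_simp
  linear_combination ρ x * Ediv' - (pd 1 u3 x - pd 2 u2 x) * Econt x hx
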